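/- Let L be a full-rank lattice in ℝ³, i.e. the ℤ-span of an ℝ-basis of ℝ³. If Q is a linear isometry of ℝ³ (an element of the orthogonal group O(3)) that maps L onto itself, then Q has finite order, and its order is 1, 2, 3, 4, or 6. -/

import Mathlib

open Polynomial in
private lemma crys_monic_dvd_prod_irred {K : Type*} [Field K] (f : ℕ → K[X]) :
    ∀ (t : Finset ℕ), (∀ i ∈ t, (f i).Monic) → (∀ i ∈ t, Irreducible (f i)) →
      ∀ p : K[X], p.Monic → p ∣ ∏ i ∈ t, f i → ∃ S ⊆ t, p = ∏ i ∈ S, f i := by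
  intro t
  induction t using Finset.induction_on with
  | empty =>
    intro _ _ p hp hdvd
    refine ⟨∅, Finset.Subset.refl _, ?_⟩
    rw [Finset.prod_empty] at hdvd ⊢
    exact hp.eq_one_of_isUnit (isUnit_of_dvd_one hdvd)
  | @insert a s ha ih =>
    intro hmon hirr p hp hdvd
    rw [Finset.prod_insert ha] at hdvd
    by_cases hfa : f a ∣ p
    · obtain ⟨q, rfl⟩ := hfa
      have hfam : (f a).Monic := hmon a (Finset.mem_insert_self a s)
      have hq : q.Monic := hfam.of_mul_monic_left hp
      have hqd : q ∣ ∏ i ∈ s, f i :=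
        (mul_dvd_mul_iff_left (a := f a) hfam.ne_zero).mp hdvd
      obtain ⟨S, hSs, rfl⟩ := ih (fun i hi => hmon i (Finset.mem_insert_of_mem hi))
        (fun i hi => hirr i (Finset.mem_insert_of_mem hi)) q hq hqd
      refine ⟨insert a S, Finset.insert_subset_insert a hSs, ?_⟩
      rw [Finset.prod_insert (fun hc => ha (hSs hc))]
    · have hcop : IsCoprime (f a) p :=
        ((hirr a (Finset.mem_insert_self a s)).coprime_iff_not_dvd).mpr hfa
      have hps : p ∣ ∏ i ∈ s, f i := hcop.symm.dvd_of_dvd_mul_left hdvd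
      obtain ⟨S, hSs, hpS⟩ := ih (fun i hi => hmon i (Finset.mem_insert_of_mem hi))
        (fun i hi => hirr i (Finset.mem_insert_of_mem hi)) p hp hps
      exact ⟨S, hSs.trans (Finset.subset_insert a s), hpS⟩

private lemma crys_totient_le_two {d : ℕ} (hd : 0 < d) (h : d.totient ≤ 2) :
    d = 1 ∨ d = 2 ∨ d = 3 ∨ d = 4 ∨ d = 6 := by
  have key : ∀ q : ℕ, q ∣ d → 2 < q.totient → False := by
    intro q hq hq2
    have h1 := Nat.totient_dvd_of_dvd hq
    have h2 := Nat.le_of_dvd (Nat.totient_pos.mpr hd) h1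
    omega
  have h8 : ¬ (8 ∣ d) := fun hc => key 8 hc (by decide)
  have h9 : ¬ (9 ∣ d) := fun hc => key 9 hc (by decide)
  have hple : ∀ p : ℕ, p.Prime → p ∣ d → p ≤ 3 := by
    intro p pp hpd
    by_contra hlt
    refine key p hpd ?_
    have hpt : p.totient = p - 1 := Nat.totient_prime pp
    omega
  have hdvd12 : d ∣ 12 := by
    set a := d.factorization 2 with hadef
    set m := ordCompl[2] d with hmdef
    have hdm : 2 ^ a * m = d := Nat.ordProj_mul_ordCompl_eq_self d 2
    have hm0 : m ≠ 0 := by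
      intro hc; rw [hc, mul_zero] at hdm; omega
    set b := m.factorization 3 with hbdef
    set r := ordCompl[3] m with hrdef
    have hmr : 3 ^ b * r = m := Nat.ordProj_mul_ordCompl_eq_self m 3
    have hr0 : r ≠ 0 := by
      intro hc; rw [hc, mul_zero] at hmr; exact hm0 hmr.symm
    have hrd : r ∣ d := by
      refine dvd_trans (Dvd.intro_left _ hmr) ?_
      exact Dvd.intro_left _ hdm
    have hr1 : r = 1 := by
      by_contra hr1
      have hpp : r.minFac.Prime := Nat.minFac_prime hr1
      have hpr : r.minFac ∣ r := Nat.minFac_dvd r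
      have hp3 : r.minFac ≤ 3 := hple _ hpp (hpr.trans hrd)
      have h2le := hpp.two_le
      have hne2 : r.minFac ≠ 2 := by
        intro hc
        have h2m : r.minFac ∣ m := hpr.trans (Dvd.intro_left _ hmr)
        rw [hc] at h2m
        exact Nat.not_dvd_ordCompl Nat.prime_two (by omega : d ≠ 0) h2m
      have hne3 : r.minFac ≠ 3 := by
        intro hc
        rw [hc] at hpr
        exact Nat.not_dvd_ordCompl Nat.prime_three hm0 hpr
      omega
    have ha2 : a ≤ 2 := by
      by_contra hc
      refine h8 ?_
      have : (2:ℕ) ^ 3 ∣ 2 ^ a := pow_dvd_pow 2 (by omega)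
      exact dvd_trans (by norm_num at this ⊢; exact this) (hdm ▸ Dvd.intro _ rfl)
    have hb1 : b ≤ 1 := by
      by_contra hc
      refine h9 ?_
      have h32 : (3:ℕ) ^ 2 ∣ 3 ^ b := pow_dvd_pow 3 (by omega)
      have h3m : (9:ℕ) ∣ m := by
        norm_num at h32
        exact h32.trans (hmr ▸ Dvd.intro _ rfl)
      exact h3m.trans (hdm ▸ Dvd.intro_left _ rfl)
    have hdeq : d = 2 ^ a * 3 ^ b := by
      rw [← hdm, ← hmr, hr1, mul_one]
    rw [hdeq]
    calc 2 ^ a * 3 ^ b ∣ 2 ^ 2 * 3 ^ 1 :=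
          mul_dvd_mul (pow_dvd_pow 2 ha2) (pow_dvd_pow 3 hb1)
      _ = 12 := by norm_num
  have hle : d ≤ 12 := Nat.le_of_dvd (by norm_num) hdvd12
  interval_cases d <;> revert hdvd12 h <;> decide

open Polynomial in
/-- Crystallographic restriction in the plane: a linear isometry of `ℝ³`
mapping a full-rank lattice onto itself has finite order `1`, `2`, `3`, `4`, or `6`. -/
theorem crystallographic_restriction_O3_lattice
    (b : Module.Basis (Fin 3) ℝ (EuclideanSpace ℝ (Fin 3)))
    (L : Submodule ℤ (EuclideanSpace ℝ (Fin 3)))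
    (hL : L = Submodule.span ℤ (Set.range b))
    (Q : EuclideanSpace ℝ (Fin 3) ≃ₗᵢ[ℝ] EuclideanSpace ℝ (Fin 3))
    (hQ : Q '' (L : Set (EuclideanSpace ℝ (Fin 3))) = (L : Set (EuclideanSpace ℝ (Fin 3)))) :
    IsOfFinOrder Q ∧ orderOf Q ∈ ({1, 2, 3, 4, 6} : Set ℕ) := by
  subst hL
  classical
  have hQmem : ∀ x ∈ Submodule.span ℤ (Set.range b), Q x ∈ Submodule.span ℤ (Set.range b) := by
    intro x hx
    have h1 : Q x ∈ Q '' (Submodule.span ℤ (Set.range b) : Set (EuclideanSpace ℝ (Fin 3))) :=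
      Set.mem_image_of_mem _ hx
    rwa [hQ] at h1
  have hQpow : ∀ k, ∀ x ∈ Submodule.span ℤ (Set.range b),
      (Q ^ k) x ∈ Submodule.span ℤ (Set.range b) := by
    intro k
    induction k with
    | zero => intro x hx; simpa using hx
    | succ k ih =>
      intro x hx
      have h1 : (Q ^ (k + 1)) x = (Q ^ k) (Q x) := by rw [pow_succ]; rfl
      rw [h1]; exact ih _ (hQmem x hx)
  set u : EuclideanSpace ℝ (Fin 3) →ₗ[ℝ] EuclideanSpace ℝ (Fin 3) :=
    Q.toLinearEquiv.toLinearMap with hu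
  have hux : ∀ x, u x = Q x := fun x => rfl
  have hupow : ∀ k x, (u ^ k) x = (Q ^ k) x := by
    intro k
    induction k with
    | zero => intro x; simp
    | succ k ih =>
      intro x
      rw [pow_succ, pow_succ]
      have h1 : (Q ^ k * Q) x = (Q ^ k) (Q x) := rfl
      rw [h1, Module.End.mul_apply, hux, ih]
  set R : Matrix (Fin 3) (Fin 3) ℝ := LinearMap.toMatrixAlgEquiv b u with hR
  have hRpow : ∀ k, LinearMap.toMatrixAlgEquiv b (u ^ k) = R ^ k := by
    intro k; rw [hR, map_pow]
  have hRentry : ∀ k i j, (R ^ k) i j = b.repr ((Q ^ k) (b j)) i := by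
    intro k i j
    rw [← hRpow k, LinearMap.toMatrixAlgEquiv_apply, hupow]
  have hball : ∀ j, b j ∈ Submodule.span ℤ (Set.range b) :=
    fun j => Submodule.subset_span (Set.mem_range_self j)
  have hz : ∀ k i j, ∃ z : ℤ, (z : ℝ) = (R ^ k) i j := by
    intro k i j
    have hmem : (Q ^ k) (b j) ∈ Submodule.span ℤ (Set.range b) := hQpow k _ (hball j)
    obtain ⟨z, hz⟩ := (b.mem_span_iff_repr_mem (R := ℤ) _).mp hmem i
    refine ⟨z, ?_⟩
    rw [hRentry]
    exact_mod_cast hz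
  choose zm hzm using hz
  set g : EuclideanSpace ℝ (Fin 3) →L[ℝ] (Fin 3 → ℝ) :=
    LinearMap.toContinuousLinearMap b.equivFun.toLinearMap with hg
  set C : ℝ := ‖g‖ * ∑ j', ‖b j'‖ with hC
  have hbound : ∀ k i j, |(R ^ k) i j| ≤ C := by
    intro k i j
    have h1 : (R ^ k) i j = g ((Q ^ k) (b j)) i := by
      rw [hRentry]; rfl
    rw [h1]
    have h2 : |g ((Q ^ k) (b j)) i| ≤ ‖g ((Q ^ k) (b j))‖ := by
      have := norm_le_pi_norm (g ((Q ^ k) (b j))) i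
      simpa [Real.norm_eq_abs] using this
    have h3 : ‖g ((Q ^ k) (b j))‖ ≤ ‖g‖ * ‖(Q ^ k) (b j)‖ := g.le_opNorm _
    have h4 : ‖(Q ^ k) (b j)‖ = ‖b j‖ := by
      have : ∀ (e : EuclideanSpace ℝ (Fin 3) ≃ₗᵢ[ℝ] EuclideanSpace ℝ (Fin 3)) x,
          ‖e x‖ = ‖x‖ := fun e x => e.norm_map x
      exact this (Q ^ k) (b j)
    have h5 : ‖b j‖ ≤ ∑ j', ‖b j'‖ :=
      Finset.single_le_sum (fun i _ => norm_nonneg _) (Finset.mem_univ j)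
    have h6 : ‖g‖ * ‖b j‖ ≤ C := by
      rw [hC]
      exact mul_le_mul_of_nonneg_left h5 (norm_nonneg g)
    calc |g ((Q ^ k) (b j)) i| ≤ ‖g ((Q ^ k) (b j))‖ := h2
      _ ≤ ‖g‖ * ‖(Q ^ k) (b j)‖ := h3
      _ = ‖g‖ * ‖b j‖ := by rw [h4]
      _ ≤ C := h6
  set c : ℤ := ⌈C⌉ with hc
  have hzb : ∀ k i j, zm k i j ∈ Set.Icc (-c) c := by
    intro k i j
    have h1 : |(zm k i j : ℝ)| ≤ C := by rw [hzm]; exact hbound k i j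
    rw [abs_le] at h1
    have h2 : C ≤ (c : ℝ) := Int.le_ceil C
    constructor
    · exact_mod_cast le_trans (by linarith : -(c:ℝ) ≤ (zm k i j : ℝ)) le_rfl
    · exact_mod_cast le_trans h1.2 h2
  have hfin : (Set.univ.pi fun _ : Fin 3 =>
      Set.univ.pi fun _ : Fin 3 => Set.Icc (-c) c).Finite :=
    Set.Finite.pi fun _ => Set.Finite.pi fun _ => Set.finite_Icc _ _
  have hmaps : Set.MapsTo zm Set.univ
      (Set.univ.pi fun _ : Fin 3 => Set.univ.pi fun _ : Fin 3 => Set.Icc (-c) c) := by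
    intro k _
    rw [Set.mem_univ_pi]
    intro i
    rw [Set.mem_univ_pi]
    intro j
    exact hzb k i j
  obtain ⟨k, -, l, -, hkl, hzkl⟩ :=
    Set.infinite_univ.exists_ne_map_eq_of_mapsTo hmaps hfin
  have hmain : ∀ k l : ℕ, k < l → zm k = zm l → ∃ m, 0 < m ∧ Q ^ m = 1 := by
    intro k l hkl hzkl
    have hRkl : R ^ k = R ^ l := by
      ext i j
      rw [← hzm k i j, ← hzm l i j, hzkl]
    have hukl : u ^ k = u ^ l :=
      (LinearMap.toMatrixAlgEquiv b).injective (by rw [hRpow, hRpow, hRkl])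
    have hQkl : Q ^ k = Q ^ l := by
      ext x
      rw [← hupow, ← hupow, hukl]
    refine ⟨l - k, by omega, ?_⟩
    have h1 : Q ^ k * Q ^ (l - k) = Q ^ k * 1 := by
      rw [mul_one, ← pow_add, Nat.add_sub_cancel' (le_of_lt hkl), hQkl]
    exact mul_left_cancel h1
  have hQfin : ∃ m, 0 < m ∧ Q ^ m = 1 := by
    rcases lt_or_gt_of_ne hkl with h | h
    · exact hmain k l h hzkl
    · exact hmain l k h hzkl.symm
  have hfo : IsOfFinOrder Q := isOfFinOrder_iff_pow_eq_one.mpr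
    (by obtain ⟨m, hm, he⟩ := hQfin; exact ⟨m, hm, he⟩)
  -- transfer to an integer matrix
  set N : Matrix (Fin 3) (Fin 3) ℤ := Matrix.of (zm 1) with hN
  have hNR : (Int.castRingHom ℝ).mapMatrix N = R := by
    ext i j
    have h1 : ((zm 1 i j : ℝ)) = (R ^ 1) i j := hzm 1 i j
    rw [pow_one] at h1
    simpa [hN, Matrix.map_apply] using h1
  have hNRpow : ∀ k, (Int.castRingHom ℝ).mapMatrix (N ^ k) = R ^ k := by
    intro k
    rw [map_pow, hNR]
  set A : Matrix (Fin 3) (Fin 3) ℚ := (Int.castRingHom ℚ).mapMatrix N with hA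
  have hinjR : ∀ P : Matrix (Fin 3) (Fin 3) ℤ, (Int.castRingHom ℝ).mapMatrix P = 1 → P = 1 := by
    intro P hP
    ext i j
    have h2 : ((P i j : ℝ)) = (1 : Matrix (Fin 3) (Fin 3) ℝ) i j := by
      rw [← hP]; rfl
    rw [Matrix.one_apply] at h2
    rw [Matrix.one_apply]
    split_ifs at h2 ⊢ <;> exact_mod_cast h2
  have hinjQ : ∀ P : Matrix (Fin 3) (Fin 3) ℤ, (Int.castRingHom ℚ).mapMatrix P = 1 → P = 1 := by
    intro P hP
    ext i j
    have h2 : ((P i j : ℚ)) = (1 : Matrix (Fin 3) (Fin 3) ℚ) i j := by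
      rw [← hP]; rfl
    rw [Matrix.one_apply] at h2
    rw [Matrix.one_apply]
    split_ifs at h2 ⊢ <;> exact_mod_cast h2
  have hQN : ∀ k : ℕ, Q ^ k = 1 ↔ N ^ k = 1 := by
    intro k
    constructor
    · intro h
      refine hinjR _ ?_
      rw [hNRpow, ← hRpow]
      have huk : u ^ k = 1 := by
        refine LinearMap.ext fun x => ?_
        rw [hupow, h]
        rfl
      rw [huk, map_one]
    · intro h
      have hRk : R ^ k = 1 := by rw [← hNRpow, h, map_one]
      have huk : u ^ k = (1 : _) :=
        (LinearMap.toMatrixAlgEquiv b).injective (by rw [hRpow, hRk, map_one])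
      ext x
      have h1 : (Q ^ k) x = (u ^ k) x := (hupow k x).symm
      rw [h1, huk]
      rfl
  have hNA : ∀ k : ℕ, N ^ k = 1 ↔ A ^ k = 1 := by
    intro k
    constructor
    · intro h
      rw [hA, ← map_pow, h, map_one]
    · intro h
      refine hinjQ _ ?_
      rw [map_pow]
      exact h
  have horder : orderOf Q = orderOf A :=
    orderOf_eq_orderOf_iff.mpr fun k => (hQN k).trans (hNA k)
  set n : ℕ := orderOf Q with hn
  have hnpos : 0 < n := hfo.orderOf_pos
  have hAn : A ^ n = 1 := (hNA n).mp ((hQN n).mp (pow_orderOf_eq_one Q))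
  have haev : (Polynomial.aeval A) (X ^ n - 1 : ℚ[X]) = 0 := by
    rw [map_sub, map_pow, aeval_X, map_one, hAn, sub_self]
  have hAint : IsIntegral ℚ A :=
    ⟨X ^ n - 1, by simpa using monic_X_pow_sub_C (1 : ℚ) hnpos.ne', haev⟩
  have hpmonic : (minpoly ℚ A).Monic := minpoly.monic hAint
  have hpdvd : minpoly ℚ A ∣ X ^ n - 1 := minpoly.dvd ℚ A haev
  have hdeg3 : (minpoly ℚ A).natDegree ≤ 3 := by
    have h1 : minpoly ℚ A ∣ A.charpoly := A.minpoly_dvd_charpoly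
    have h2 := Polynomial.natDegree_le_of_dvd h1 A.charpoly_monic.ne_zero
    rwa [A.charpoly_natDegree_eq_dim, Fintype.card_fin] at h2
  rw [← prod_cyclotomic_eq_X_pow_sub_one hnpos ℚ] at hpdvd
  obtain ⟨S, hS, hpeq⟩ := crys_monic_dvd_prod_irred (fun d => cyclotomic d ℚ) n.divisors
    (fun d _ => cyclotomic.monic d ℚ)
    (fun d hd => cyclotomic.irreducible_rat (Nat.pos_of_mem_divisors hd))
    (minpoly ℚ A) hpmonic hpdvd
  have hdpos : ∀ d ∈ S, 0 < d := fun d hd => Nat.pos_of_mem_divisors (hS hd)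
  set K : ℕ := S.lcm id with hK
  have hKn : K ∣ n := Finset.lcm_dvd fun d hd => (Nat.mem_divisors.mp (hS hd)).1
  have hpdvdK : minpoly ℚ A ∣ X ^ K - 1 := by
    rw [hpeq]
    refine Finset.prod_dvd_of_coprime ?_ ?_
    · intro d hd e he hde
      refine ((cyclotomic.irreducible_rat (hdpos d hd)).coprime_iff_not_dvd).mpr ?_
      intro hdvd
      have hassoc := ((cyclotomic.irreducible_rat (hdpos d hd)).associated_of_dvd
        (cyclotomic.irreducible_rat (hdpos e he)) hdvd)
      have heq := eq_of_monic_of_associated (cyclotomic.monic d ℚ) (cyclotomic.monic e ℚ) hassoc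
      exact hde (cyclotomic_injective heq)
    · intro d hd
      refine (cyclotomic.dvd_X_pow_sub_one d ℚ).trans ?_
      obtain ⟨cc, hcc⟩ : (d : ℕ) ∣ K := Finset.dvd_lcm hd
      rw [hcc, pow_mul]
      simpa using sub_dvd_pow_sub_pow ((X : ℚ[X]) ^ d) 1 cc
  have hnK : n ∣ K := by
    have haevK : (Polynomial.aeval A) (X ^ K - 1 : ℚ[X]) = 0 := by
      obtain ⟨q, hq⟩ := hpdvdK
      rw [hq, map_mul, minpoly.aeval, zero_mul]
    have hAK : A ^ K = 1 := by
      have := haevK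
      rw [map_sub, map_pow, aeval_X, map_one, sub_eq_zero] at this
      exact this
    have h1 := orderOf_dvd_of_pow_eq_one hAK
    rwa [← horder] at h1
  have hsum : ∑ d ∈ S, d.totient ≤ 3 := by
    have h1 : (minpoly ℚ A).natDegree = ∑ d ∈ S, (cyclotomic d ℚ).natDegree := by
      rw [hpeq]
      exact natDegree_prod _ _ fun d hd => cyclotomic_ne_zero d ℚ
    simp only [natDegree_cyclotomic] at h1
    omega
  have hclass : ∀ d ∈ S, d = 1 ∨ d = 2 ∨ d = 3 ∨ d = 4 ∨ d = 6 := by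
    intro d hd
    refine crys_totient_le_two (hdpos d hd) ?_
    have h1 : d.totient ≤ 3 :=
      le_trans (Finset.single_le_sum (fun i _ => Nat.zero_le _) hd) hsum
    rcases le_or_gt d 2 with h2 | h2
    · have hd1 := hdpos d hd
      interval_cases d <;> decide
    · obtain ⟨r, hr⟩ := Nat.totient_even h2
      omega
  have hK12 : K ∣ 12 := Finset.lcm_dvd fun d hd => by
    rcases hclass d hd with rfl | rfl | rfl | rfl | rfl <;> norm_num
  have hn12 : n ∣ 12 := hnK.trans hK12
  have hne12 : n ≠ 12 := by
    intro h12
    have h4 : ∃ d ∈ S, ¬ d ∣ 6 := by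
      by_contra hcon
      push_neg at hcon
      have hK6 : K ∣ 6 := Finset.lcm_dvd fun d hd => hcon d hd
      have hn6 : n ∣ 6 := hnK.trans hK6
      rw [h12] at hn6
      exact absurd (Nat.le_of_dvd (by norm_num) hn6) (by norm_num)
    have h3 : ∃ d ∈ S, ¬ d ∣ 4 := by
      by_contra hcon
      push_neg at hcon
      have hK4 : K ∣ 4 := Finset.lcm_dvd fun d hd => hcon d hd
      have hn4 : n ∣ 4 := hnK.trans hK4
      rw [h12] at hn4
      exact absurd (Nat.le_of_dvd (by norm_num) hn4) (by norm_num)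
    obtain ⟨d0, hd0S, hd06⟩ := h4
    obtain ⟨d1, hd1S, hd14⟩ := h3
    have hd04 : d0 = 4 := by
      rcases hclass d0 hd0S with rfl | rfl | rfl | rfl | rfl <;> omega
    have hd136 : d1 = 3 ∨ d1 = 6 := by
      rcases hclass d1 hd1S with rfl | rfl | rfl | rfl | rfl <;> omega
    have hne : d0 ≠ d1 := by omega
    have hsub : ({d0, d1} : Finset ℕ) ⊆ S := by
      intro x hx
      rcases Finset.mem_insert.mp hx with rfl | hx
      · exact hd0S
      · rw [Finset.mem_singleton.mp hx]; exact hd1S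
    have hle2 : d0.totient + d1.totient ≤ ∑ d ∈ S, d.totient := by
      have h5 := Finset.sum_le_sum_of_subset (f := Nat.totient) hsub
      rwa [Finset.sum_insert (by simp [hne]), Finset.sum_singleton] at h5
    have ht0 : d0.totient = 2 := by rw [hd04]; decide
    have ht1 : d1.totient = 2 := by rcases hd136 with rfl | rfl <;> decide
    omega
  have hfinal : n = 1 ∨ n = 2 ∨ n = 3 ∨ n = 4 ∨ n = 6 := by
    have h1 : n ∈ Nat.divisors 12 := Nat.mem_divisors.mpr ⟨hn12, by norm_num⟩
    have h2 : Nat.divisors 12 = {1, 2, 3, 4, 6, 12} := by decide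
    rw [h2] at h1
    simp only [Finset.mem_insert, Finset.mem_singleton] at h1
    omega
  refine ⟨hfo, ?_⟩
  simp only [Set.mem_insert_iff, Set.mem_singleton_iff]
  exact hfinal
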